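/- Let G be a graph, u,v non-adjacent, and suppose S_a, S_b are uv-separators with |S_a| = |S_b| = k and there exists a (k+1)-TAR reconfiguration sequence ⟨S₁ = S_a, …, S_ℓ = S_b⟩ (consecutive symmetric difference 1, all sizes ≤ k+1). Then there exists such a sequence in which |S_i| ≥ k for all i, with |S_i| = k exactly when i is odd and |S_i| = k+1 exactly when i is even. -/
import Mathlib

set_option linter.unusedSectionVars false
set_option maxHeartbeats 1000000

/-- `S` is a `uv`-separator in `G`. -/
def IsSep {V : Type*} (G : SimpleGraph V) (u v : V) (S : Set V) : Prop :=
  u ∉ S ∧ v ∉ S ∧ ∀ p : G.Walk u v, ∃ w ∈ S, w ∈ p.support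

section Aux
variable {V : Type*} [Fintype V] {G : SimpleGraph V} {u v : V}

lemma isSep_superset {S T : Set V} (hS : IsSep G u v S) (hsub : S ⊆ T)
    (hu : u ∉ T) (hv : v ∉ T) : IsSep G u v T :=
  ⟨hu, hv, fun p => by obtain ⟨w, hw, hw'⟩ := hS.2.2 p; exact ⟨w, hsub hw, hw'⟩⟩

lemma step_cases {S T : Set V} (h : (symmDiff S T).ncard = 1) :
    (∃ x, x ∉ S ∧ T = insert x S) ∨ (∃ x, x ∈ S ∧ T = S \ {x}) := by
  obtain ⟨a, ha⟩ := Set.ncard_eq_one.mp h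
  rw [Set.symmDiff_def] at ha
  have ha' : ∀ w, ((w ∈ S ∧ w ∉ T) ∨ (w ∈ T ∧ w ∉ S)) ↔ w = a := by
    intro w
    have := Set.ext_iff.mp ha w
    simpa using this
  by_cases haS : a ∈ S
  · right
    have haT : a ∉ T := by have := (ha' a).mpr rfl; tauto
    refine ⟨a, haS, ?_⟩
    ext w
    have h1 := ha' w
    constructor
    · intro hwT
      by_cases hw : w = a
      · exact absurd (hw ▸ hwT) haT
      · simp only [Set.mem_diff, Set.mem_singleton_iff]; tauto
    · intro hw
      simp only [Set.mem_diff, Set.mem_singleton_iff] at hw; tauto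
  · left
    have haT : a ∈ T := by have := (ha' a).mpr rfl; tauto
    refine ⟨a, haS, ?_⟩
    ext w
    have h1 := ha' w
    simp only [Set.mem_insert_iff]
    by_cases hw : w = a
    · subst hw; tauto
    · tauto

lemma prepend (k : ℕ) (C : Set V)
    (hCsep : IsSep G u v C) (hCk : C.ncard = k)
    (m : ℕ) (T : ℕ → Set V)
    (hxy : ∃ x y, x ∉ C ∧ y ∈ C ∧ x ≠ y ∧ T 0 = insert x (C \ {y}))
    (hprops : ∀ j ≤ m, IsSep G u v (T j) ∧ (T j).ncard = k)
    (hsteps : ∀ j < m, ∃ x y, x ∉ T j ∧ y ∈ T j ∧ x ≠ y ∧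
      T (j + 1) = insert x (T j \ {y})) :
    ∃ (m' : ℕ) (T' : ℕ → Set V), T' 0 = C ∧ T' m' = T m ∧
      (∀ j ≤ m', IsSep G u v (T' j) ∧ (T' j).ncard = k) ∧
      (∀ j < m', ∃ x y, x ∉ T' j ∧ y ∈ T' j ∧ x ≠ y ∧
        T' (j + 1) = insert x (T' j \ {y})) := by
  refine ⟨m + 1, fun j => if j = 0 then C else T (j - 1), by simp, by simp, ?_, ?_⟩
  · intro j hj
    by_cases h0 : j = 0
    · simp [h0, hCsep, hCk]
    · simp only [if_neg h0]
      exact hprops (j - 1) (by omega)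
  · intro j hj
    by_cases h0 : j = 0
    · subst h0
      simpa using hxy
    · simp only [if_neg h0, if_neg (by omega : ¬ j + 1 = 0)]
      have h := hsteps (j - 1) (by omega)
      have hjj : j - 1 + 1 = j := by omega
      rw [hjj] at h
      simpa using h

lemma keyA (k : ℕ) :
    ∀ n : ℕ, ∀ f : ℕ → Set V, ∀ C : Set V,
      f 0 ⊆ C → IsSep G u v C → C.ncard = k →
      (∀ i ≤ n, IsSep G u v (f i) ∧ (f i).ncard ≤ k + 1) →
      (∀ i < n, (symmDiff (f i) (f (i + 1))).ncard = 1) →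
      (f n).ncard = k →
      ∃ (m : ℕ) (T : ℕ → Set V), T 0 = C ∧ T m = f n ∧
        (∀ j ≤ m, IsSep G u v (T j) ∧ (T j).ncard = k) ∧
        (∀ j < m, ∃ x y, x ∉ T j ∧ y ∈ T j ∧ x ≠ y ∧
          T (j + 1) = insert x (T j \ {y})) := by
  intro n
  induction n using Nat.strong_induction_on with
  | _ n IH =>
    intro f C hsub hCsep hCk hseq hstep hend
    match n with
    | 0 =>
      have hCf : f 0 = C :=
        Set.eq_of_subset_of_ncard_le hsub (by rw [hend, hCk]) (Set.toFinite C)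
      exact ⟨0, fun _ => C, rfl, hCf.symm, fun j _ => ⟨hCsep, hCk⟩,
        fun j hj => absurd hj (by omega)⟩
    | (n' + 1) =>
      rcases step_cases (hstep 0 (by omega)) with ⟨x, hx, h1⟩ | ⟨x, hx, h1⟩
      · -- addition: f 1 = insert x (f 0)
        by_cases hxC : x ∈ C
        · -- f 1 ⊆ C, shift by 1
          have hsub1 : f 1 ⊆ C := by
            rw [h1]; exact Set.insert_subset hxC hsub
          exact IH n' (by omega) (fun i => f (i + 1)) C hsub1 hCsep hCk
            (fun i hi => hseq (i + 1) (by omega))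
            (fun i hi => hstep (i + 1) (by omega)) hend
        · by_cases hcard : (f 1).ncard ≤ k
          · -- swap case
            have hxf1 : x ∈ f 1 := by rw [h1]; exact Set.mem_insert x _
            have hne : (C \ f 1).Nonempty := by
              by_contra hne
              rw [Set.not_nonempty_iff_eq_empty, Set.diff_eq_empty] at hne
              have hCsub : C ⊆ f 1 \ {x} := fun w hw =>
                ⟨hne hw, by rintro rfl; exact hxC hw⟩
              have h2 : C.ncard ≤ (f 1 \ {x}).ncard :=
                Set.ncard_le_ncard hCsub (Set.toFinite _)
              have h3 : (f 1 \ {x}).ncard = (f 1).ncard - 1 :=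
                Set.ncard_diff_singleton_of_mem hxf1
              have h4 : 0 < (f 1).ncard := (Set.ncard_pos (Set.toFinite _)).mpr ⟨x, hxf1⟩
              omega
            obtain ⟨y, hyC, hyf1⟩ := hne
            have hxy : x ≠ y := fun h => hyf1 (h ▸ hxf1)
            set C' : Set V := insert x (C \ {y}) with hC'def
            have hsub1 : f 1 ⊆ C' := by
              rw [h1]
              apply Set.insert_subset_insert
              intro w hw
              exact ⟨hsub hw, by rintro rfl; exact hyf1 (by rw [h1]; exact Set.mem_insert_of_mem _ hw)⟩
            have hxCd : x ∉ C \ {y} := fun h => hxC h.1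
            have hC'k : C'.ncard = k := by
              rw [hC'def, Set.ncard_insert_of_notMem hxCd,
                Set.ncard_diff_singleton_of_mem hyC, hCk]
              have : 0 < C.ncard := (Set.ncard_pos (Set.toFinite _)).mpr ⟨y, hyC⟩
              omega
            have hf1sep := (hseq 1 (by omega)).1
            have hC'sep : IsSep G u v C' := by
              apply isSep_superset hf1sep hsub1
              · rintro (h | h)
                · exact hf1sep.1 (h ▸ hxf1)
                · exact hCsep.1 h.1
              · rintro (h | h)
                · exact hf1sep.2.1 (h ▸ hxf1)
                · exact hCsep.2.1 h.1
            obtain ⟨m, T, hT0, hTm, hTp, hTs⟩ :=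
              IH n' (by omega) (fun i => f (i + 1)) C' hsub1 hC'sep hC'k
                (fun i hi => hseq (i + 1) (by omega))
                (fun i hi => hstep (i + 1) (by omega)) hend
            obtain ⟨m', T', h1', h2', h3', h4'⟩ :=
              prepend k C hCsep hCk m T ⟨x, y, hxC, hyC, hxy, by rw [hT0]⟩ hTp hTs
            exact ⟨m', T', h1', by rw [h2', hTm], h3', h4'⟩
          · -- peak case: f 1 has size k + 1
            have hxf1 : x ∈ f 1 := by rw [h1]; exact Set.mem_insert x _
            have hf1k : (f 1).ncard = k + 1 := le_antisymm (hseq 1 (by omega)).2 (by omega)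
            have hf0k : (f 0).ncard = k := by
              have : (f 1).ncard = (f 0).ncard + 1 := by
                rw [h1, Set.ncard_insert_of_notMem hx]
              omega
            have hf0C : f 0 = C :=
              Set.eq_of_subset_of_ncard_le hsub (by rw [hf0k, hCk]) (Set.toFinite C)
            match n' with
            | 0 => rw [hend] at hf1k; omega
            | (n'' + 1) =>
              rcases step_cases (hstep 1 (by omega)) with ⟨z, hz, h2⟩ | ⟨y, hy, h2⟩
              · -- addition again: size k + 2 > k + 1, contradiction
                exfalso
                have := (hseq 2 (by omega)).2
                rw [h2, Set.ncard_insert_of_notMem hz, hf1k] at this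
                omega
              · -- removal: f 2 = f 1 \ {y}
                by_cases hyx : y = x
                · -- f 2 = f 0 = C, shift by 2
                  have hf2 : f 2 = f 0 := by
                    rw [h2, hyx, h1, Set.insert_diff_self_of_notMem hx]
                  have hsub2 : f 2 ⊆ C := by rw [hf2, hf0C]
                  exact IH n'' (by omega) (fun i => f (i + 2)) C hsub2 hCsep hCk
                    (fun i hi => hseq (i + 2) (by omega))
                    (fun i hi => hstep (i + 2) (by omega)) hend
                · -- swap of x for y at distance 2
                  have hyC : y ∈ C := by
                    rw [← hf0C]
                    rcases (h1 ▸ hy : y ∈ insert x (f 0)) with h | h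
                    · exact absurd h hyx
                    · exact h
                  have hxy : x ≠ y := fun h => hyx h.symm
                  have hf2eq : f 2 = insert x (C \ {y}) := by
                    rw [h2, h1, hf0C, Set.insert_diff_of_notMem _
                      (by simpa using hxy)]
                  have hf2k : (f 2).ncard = k := by
                    rw [h2, Set.ncard_diff_singleton_of_mem hy, hf1k]
                    omega
                  have hf2sep := (hseq 2 (by omega)).1
                  obtain ⟨m, T, hT0, hTm, hTp, hTs⟩ :=
                    IH n'' (by omega) (fun i => f (i + 2)) (f 2) (le_refl _)
                      hf2sep hf2k
                      (fun i hi => hseq (i + 2) (by omega))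
                      (fun i hi => hstep (i + 2) (by omega)) hend
                  obtain ⟨m', T', h1', h2', h3', h4'⟩ :=
                    prepend k C hCsep hCk m T
                      ⟨x, y, hxC, hyC, hxy, by rw [hT0, hf2eq]⟩ hTp hTs
                  exact ⟨m', T', h1', by rw [h2', hTm], h3', h4'⟩
      · -- removal: f 1 = f 0 \ {x} ⊆ C, shift by 1
        have hsub1 : f 1 ⊆ C := by
          rw [h1]; exact (Set.diff_subset).trans hsub
        exact IH n' (by omega) (fun i => f (i + 1)) C hsub1 hCsep hCk
          (fun i hi => hseq (i + 1) (by omega))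
          (fun i hi => hstep (i + 1) (by omega)) hend

lemma swap_facts {A : Set V} {x y : V} (hx : x ∉ A) (hy : y ∈ A) (hxy : x ≠ y) :
    A ∪ insert x (A \ {y}) = insert x A ∧
    symmDiff A (insert x A) = {x} ∧
    symmDiff (insert x A) (insert x (A \ {y})) = {y} := by
  refine ⟨?_, ?_, ?_⟩ <;> ext w <;>
    simp only [Set.symmDiff_def, Set.sup_eq_union, Set.mem_union, Set.mem_diff,
      Set.mem_insert_iff, Set.mem_singleton_iff] <;>
    by_cases hwx : w = x <;> by_cases hwy : w = y <;>
    first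
    | (exfalso; exact hxy (hwx ▸ hwy ▸ rfl))
    | (subst hwx; tauto)
    | (subst hwy; tauto)
    | tauto

end Aux

/-- If `Sa, Sb` are `uv`-separators of size `k` joined by a `(k+1)`-TAR
sequence, then they are joined by a `(k+1)`-TAR sequence whose states have size
exactly `k` at even positions (odd positions in 1-based indexing) and exactly
`k+1` at odd positions. -/
theorem stmt13 {V : Type*} [Fintype V] (G : SimpleGraph V) (u v : V)
    (huv : ¬ G.Adj u v) (k : ℕ) (Sa Sb : Set V)
    (hSa : IsSep G u v Sa) (hSb : IsSep G u v Sb)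
    (hka : Sa.ncard = k) (hkb : Sb.ncard = k)
    (hex : ∃ (n : ℕ) (f : ℕ → Set V), f 0 = Sa ∧ f n = Sb ∧
      (∀ i ≤ n, IsSep G u v (f i) ∧ (f i).ncard ≤ k + 1) ∧
      (∀ i < n, (symmDiff (f i) (f (i + 1))).ncard = 1)) :
    ∃ (n : ℕ) (f : ℕ → Set V), f 0 = Sa ∧ f n = Sb ∧
      (∀ i ≤ n, IsSep G u v (f i) ∧ (f i).ncard ≤ k + 1) ∧
      (∀ i < n, (symmDiff (f i) (f (i + 1))).ncard = 1) ∧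
      (∀ i ≤ n, k ≤ (f i).ncard ∧
        (Even i → (f i).ncard = k) ∧ (¬ Even i → (f i).ncard = k + 1)) := by
  obtain ⟨n, f, hf0, hfn, hseq, hstep⟩ := hex
  obtain ⟨m, T, hT0, hTm, hTp, hTs⟩ :=
    keyA k n f Sa (by rw [hf0]) hSa hka hseq hstep (by rw [hfn]; exact hkb)
  have hTmSb : T m = Sb := by rw [hTm, hfn]
  set g : ℕ → Set V :=
    fun i => if Even i then T (i / 2) else T (i / 2) ∪ T (i / 2 + 1) with hgdef
  have hEven : ∀ j : ℕ, Even (2 * j) := fun j => ⟨j, two_mul j⟩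
  have hNotEven : ∀ j : ℕ, ¬ Even (2 * j + 1) := fun j => by
    rw [Nat.even_iff]; omega
  have hg_even : ∀ j, g (2 * j) = T j := by
    intro j
    have hd : 2 * j / 2 = j := by omega
    simp only [hgdef, if_pos (hEven j), hd]
  have hg_odd : ∀ j, g (2 * j + 1) = T j ∪ T (j + 1) := by
    intro j
    have hd : (2 * j + 1) / 2 = j := by omega
    simp only [hgdef, if_neg (hNotEven j), hd]
  have hU : ∀ j, j < m → IsSep G u v (T j ∪ T (j + 1)) ∧
      (T j ∪ T (j + 1)).ncard = k + 1 := by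
    intro j hj
    obtain ⟨x, y, hx, hy, hxy, hTstep⟩ := hTs j hj
    obtain ⟨hu1, _, _⟩ := swap_facts (A := T j) hx hy hxy
    have hunion : T j ∪ T (j + 1) = insert x (T j) := by rw [hTstep]; exact hu1
    have hxT1 : x ∈ T (j + 1) := by rw [hTstep]; exact Set.mem_insert x _
    have hsep1 := (hTp (j + 1) (by omega)).1
    have hsepj := (hTp j (by omega)).1
    constructor
    · rw [hunion]
      apply isSep_superset hsepj (Set.subset_insert x _)
      · rintro (h | h)
        · exact hsep1.1 (h ▸ hxT1)
        · exact hsepj.1 h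
      · rintro (h | h)
        · exact hsep1.2.1 (h ▸ hxT1)
        · exact hsepj.2.1 h
    · rw [hunion, Set.ncard_insert_of_notMem hx, (hTp j (by omega)).2]
  refine ⟨2 * m, g, by simpa using (hg_even 0).trans hT0,
    by simpa using (hg_even m).trans hTmSb, ?_, ?_, ?_⟩
  · intro i hi
    rcases Nat.even_or_odd i with he | ho
    · obtain ⟨j, hj⟩ := he
      have hij : i = 2 * j := by omega
      subst hij
      rw [hg_even j]
      have := hTp j (by omega)
      exact ⟨this.1, by omega⟩
    · obtain ⟨j, hj⟩ := ho
      subst hj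
      rw [hg_odd j]
      have := hU j (by omega)
      exact ⟨this.1, by omega⟩
  · intro i hi
    rcases Nat.even_or_odd i with he | ho
    · obtain ⟨j, hj⟩ := he
      have hij : i = 2 * j := by omega
      subst hij
      have hj' : j < m := by omega
      obtain ⟨x, y, hx, hy, hxy, hTstep⟩ := hTs j hj'
      obtain ⟨hu1, hu2, _⟩ := swap_facts (A := T j) hx hy hxy
      rw [hg_even j, hg_odd j, hTstep, hu1, hu2, Set.ncard_singleton]
    · obtain ⟨j, hj⟩ := ho
      subst hj
      have hj' : j < m := by omega
      obtain ⟨x, y, hx, hy, hxy, hTstep⟩ := hTs j hj'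
      obtain ⟨hu1, _, hu3⟩ := swap_facts (A := T j) hx hy hxy
      have h2 : 2 * j + 1 + 1 = 2 * (j + 1) := by ring
      rw [hg_odd j, h2, hg_even (j + 1), hTstep, hu1, hu3, Set.ncard_singleton]
  · intro i hi
    rcases Nat.even_or_odd i with he | ho
    · obtain ⟨j, hj⟩ := he
      have hij : i = 2 * j := by omega
      have hk' : (g i).ncard = k := by
        rw [hij, hg_even j]; exact (hTp j (by omega)).2
      exact ⟨by omega, fun _ => hk', fun h => absurd (hij ▸ hEven j) h⟩
    · obtain ⟨j, hj⟩ := ho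
      have hk' : (g i).ncard = k + 1 := by
        rw [hj, hg_odd j]; exact (hU j (by omega)).2
      refine ⟨by omega, fun h => absurd h (hj ▸ hNotEven j), fun _ => hk'⟩
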